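/- Let X and Y be Banach spaces over 𝕜 (𝕜 = ℝ or ℂ). For every F in the algebraic tensor product X ⊗ Y, the projective norm satisfies ‖F‖_π = sup { ‖Φ_φ(F)‖ : φ a bounded bilinear form on X × Y with ‖φ‖ ≤ 1 }, where Φ_φ : X ⊗ Y → 𝕜 denotes the linear functional induced by φ (so that Φ_φ(Σᵢ xᵢ ⊗ yᵢ) = Σᵢ φ(xᵢ, yᵢ)). -/
import Mathlib


/-- The projective norm of an element `F` of the algebraic tensor product `X ⊗ Y` of two
normed spaces: the infimum of `Σᵢ ‖xᵢ‖·‖yᵢ‖` over all finite representations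
`F = Σᵢ xᵢ ⊗ yᵢ`. -/
noncomputable def projNorm (𝕜 : Type*) [RCLike 𝕜] {X Y : Type*}
    [NormedAddCommGroup X] [NormedSpace 𝕜 X]
    [NormedAddCommGroup Y] [NormedSpace 𝕜 Y]
    (F : TensorProduct 𝕜 X Y) : ℝ :=
  sInf {r : ℝ | ∃ (n : ℕ) (x : Fin n → X) (y : Fin n → Y),
    F = ∑ i, x i ⊗ₜ[𝕜] y i ∧ r = ∑ i, ‖x i‖ * ‖y i‖}


open scoped TensorProduct

section aux
variable {𝕜 : Type*} [RCLike 𝕜] {X Y : Type*}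
    [NormedAddCommGroup X] [NormedSpace 𝕜 X]
    [NormedAddCommGroup Y] [NormedSpace 𝕜 Y]

/-- The set of representation sums. -/
def repSet (F : TensorProduct 𝕜 X Y) : Set ℝ :=
  {r : ℝ | ∃ (n : ℕ) (x : Fin n → X) (y : Fin n → Y),
    F = ∑ i, x i ⊗ₜ[𝕜] y i ∧ r = ∑ i, ‖x i‖ * ‖y i‖}

theorem repSet_nonempty (F : TensorProduct 𝕜 X Y) : (repSet F).Nonempty := by
  obtain ⟨s, hs⟩ := TensorProduct.exists_finset F
  refine ⟨∑ i : Fin s.card, ‖((s.equivFin.symm i : s) : X × Y).1‖ *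
      ‖((s.equivFin.symm i : s) : X × Y).2‖, s.card,
    fun i => ((s.equivFin.symm i : s) : X × Y).1,
    fun i => ((s.equivFin.symm i : s) : X × Y).2, ?_, rfl⟩
  rw [hs, ← Finset.sum_coe_sort s]
  exact (Fintype.sum_equiv s.equivFin.symm _ _ (fun i => rfl)).symm

theorem repSet_nonneg {F : TensorProduct 𝕜 X Y} {r : ℝ} (hr : r ∈ repSet F) : 0 ≤ r := by
  obtain ⟨n, x, y, -, rfl⟩ := hr
  exact Finset.sum_nonneg fun i _ => mul_nonneg (norm_nonneg _) (norm_nonneg _)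

theorem repSet_bddBelow (F : TensorProduct 𝕜 X Y) : BddBelow (repSet F) :=
  ⟨0, fun r hr => repSet_nonneg hr⟩

theorem projNorm_eq_sInf (F : TensorProduct 𝕜 X Y) : projNorm 𝕜 F = sInf (repSet F) := rfl

theorem projNorm_nonneg (F : TensorProduct 𝕜 X Y) : 0 ≤ projNorm 𝕜 F :=
  le_csInf (repSet_nonempty F) fun r hr => repSet_nonneg hr

theorem projNorm_zero : projNorm 𝕜 (0 : TensorProduct 𝕜 X Y) = 0 :=
  le_antisymm (csInf_le (repSet_bddBelow 0) ⟨0, ![], ![], by simp, by simp⟩)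
    (projNorm_nonneg 0)

theorem add_mem_repSet {F G : TensorProduct 𝕜 X Y} {a b : ℝ}
    (ha : a ∈ repSet F) (hb : b ∈ repSet G) : a + b ∈ repSet (F + G) := by
  obtain ⟨n, x, y, hF, rfl⟩ := ha
  obtain ⟨m, x', y', hG, rfl⟩ := hb
  exact ⟨n + m, Fin.append x x', Fin.append y y', by
    simp [Fin.sum_univ_add, hF, hG], by simp [Fin.sum_univ_add]⟩

theorem projNorm_add_le (F G : TensorProduct 𝕜 X Y) :
    projNorm 𝕜 (F + G) ≤ projNorm 𝕜 F + projNorm 𝕜 G := by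
  refine le_of_forall_pos_le_add fun ε hε => ?_
  obtain ⟨a, ha, hlt⟩ := Real.lt_sInf_add_pos (repSet_nonempty F) (half_pos hε)
  obtain ⟨b, hb, hlt'⟩ := Real.lt_sInf_add_pos (repSet_nonempty G) (half_pos hε)
  calc projNorm 𝕜 (F + G) ≤ a + b := csInf_le (repSet_bddBelow _) (add_mem_repSet ha hb)
    _ ≤ _ := by rw [projNorm_eq_sInf, projNorm_eq_sInf]; linarith

theorem smul_mem_repSet {F : TensorProduct 𝕜 X Y} {a : ℝ} (c : 𝕜)
    (ha : a ∈ repSet F) : ‖c‖ * a ∈ repSet (c • F) := by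
  obtain ⟨n, x, y, hF, rfl⟩ := ha
  refine ⟨n, fun i => c • x i, y, ?_, ?_⟩
  · rw [hF, Finset.smul_sum]
    simp [TensorProduct.smul_tmul']
  · rw [Finset.mul_sum]
    simp [norm_smul, mul_assoc]

theorem projNorm_smul_le (c : 𝕜) (F : TensorProduct 𝕜 X Y) :
    projNorm 𝕜 (c • F) ≤ ‖c‖ * projNorm 𝕜 F := by
  rcases eq_or_ne c 0 with rfl | hc
  · simp [projNorm_zero, projNorm_nonneg]
  · have hc' : (0:ℝ) < ‖c‖ := norm_pos_iff.2 hc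
    rw [mul_comm, ← div_le_iff₀ hc', projNorm_eq_sInf F]
    refine le_csInf (repSet_nonempty F) fun a ha => ?_
    rw [div_le_iff₀ hc', mul_comm]
    exact csInf_le (repSet_bddBelow _) (smul_mem_repSet c ha)

theorem projNorm_smul (c : 𝕜) (F : TensorProduct 𝕜 X Y) :
    projNorm 𝕜 (c • F) = ‖c‖ * projNorm 𝕜 F := by
  rcases eq_or_ne c 0 with rfl | hc
  · simp [projNorm_zero]
  refine le_antisymm (projNorm_smul_le c F) ?_
  have := projNorm_smul_le c⁻¹ (c • F)
  rw [inv_smul_smul₀ hc] at this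
  rw [norm_inv] at this
  have hc' : (0:ℝ) < ‖c‖ := norm_pos_iff.2 hc
  calc ‖c‖ * projNorm 𝕜 F ≤ ‖c‖ * (‖c‖⁻¹ * projNorm 𝕜 (c • F)) :=
        mul_le_mul_of_nonneg_left this hc'.le
    _ = projNorm 𝕜 (c • F) := by field_simp

theorem projNorm_tmul_le (x : X) (y : Y) : projNorm 𝕜 (x ⊗ₜ[𝕜] y) ≤ ‖x‖ * ‖y‖ :=
  csInf_le (repSet_bddBelow _) ⟨1, ![x], ![y], by simp, by simp⟩

/-- The projective seminorm as an `AddGroupSeminorm`. -/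
noncomputable def projAGS (𝕜 : Type*) [RCLike 𝕜] (X Y : Type*)
    [NormedAddCommGroup X] [NormedSpace 𝕜 X]
    [NormedAddCommGroup Y] [NormedSpace 𝕜 Y] :
    AddGroupSeminorm (TensorProduct 𝕜 X Y) where
  toFun := projNorm 𝕜
  map_zero' := projNorm_zero
  add_le' := projNorm_add_le
  neg' F := by
    have : ∀ G : TensorProduct 𝕜 X Y, projNorm 𝕜 (-G) ≤ projNorm 𝕜 G := fun G => by
      simpa using projNorm_smul_le (-1 : 𝕜) G
    exact le_antisymm (this F) (by simpa using this (-F))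

end aux

/-- For Banach spaces `X`, `Y`, the projective norm of `F ∈ X ⊗ Y` equals the supremum of
`‖Φ_φ(F)‖` over all bounded bilinear forms `φ` on `X × Y` of norm at most one, where
`Φ_φ : X ⊗ Y → 𝕜` is the linear functional induced by `φ`. -/
theorem stmt_13 {𝕜 : Type*} [RCLike 𝕜] {X Y : Type*}
    [NormedAddCommGroup X] [NormedSpace 𝕜 X] [CompleteSpace X]
    [NormedAddCommGroup Y] [NormedSpace 𝕜 Y] [CompleteSpace Y]
    (F : TensorProduct 𝕜 X Y) :
    projNorm 𝕜 F =
      sSup {r : ℝ | ∃ φ : X →L[𝕜] Y →L[𝕜] 𝕜, ‖φ‖ ≤ 1 ∧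
        r = ‖TensorProduct.lift
          ((ContinuousLinearMap.coeLM 𝕜).comp (φ : X →ₗ[𝕜] Y →L[𝕜] 𝕜)) F‖} := by
  have hub : ∀ r ∈ {r : ℝ | ∃ φ : X →L[𝕜] Y →L[𝕜] 𝕜, ‖φ‖ ≤ 1 ∧
      r = ‖TensorProduct.lift
        ((ContinuousLinearMap.coeLM 𝕜).comp (φ : X →ₗ[𝕜] Y →L[𝕜] 𝕜)) F‖},
      r ≤ projNorm 𝕜 F := by
    rintro r ⟨φ, hφ, rfl⟩
    refine le_csInf (repSet_nonempty F) ?_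
    rintro a ⟨n, x, y, rfl, rfl⟩
    rw [map_sum]
    refine (norm_sum_le _ _).trans (Finset.sum_le_sum fun i _ => ?_)
    have h1 : TensorProduct.lift ((ContinuousLinearMap.coeLM 𝕜).comp
        (φ : X →ₗ[𝕜] Y →L[𝕜] 𝕜)) (x i ⊗ₜ[𝕜] y i) = φ (x i) (y i) := rfl
    rw [h1]
    calc ‖φ (x i) (y i)‖ ≤ ‖φ‖ * ‖x i‖ * ‖y i‖ := φ.le_opNorm₂ _ _
      _ ≤ 1 * ‖x i‖ * ‖y i‖ := by
          gcongr
      _ = ‖x i‖ * ‖y i‖ := by ring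
  have hmem : projNorm 𝕜 F ∈ {r : ℝ | ∃ φ : X →L[𝕜] Y →L[𝕜] 𝕜, ‖φ‖ ≤ 1 ∧
      r = ‖TensorProduct.lift
        ((ContinuousLinearMap.coeLM 𝕜).comp (φ : X →ₗ[𝕜] Y →L[𝕜] 𝕜)) F‖} := by
    rcases eq_or_ne F 0 with rfl | hF
    · exact ⟨0, by rw [ContinuousLinearMap.opNorm_zero]; exact zero_le_one, by rw [projNorm_zero, map_zero, norm_zero]⟩
    letI : SeminormedAddCommGroup (TensorProduct 𝕜 X Y) :=
      (projAGS 𝕜 X Y).toSeminormedAddCommGroup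
    letI : NormedSpace 𝕜 (TensorProduct 𝕜 X Y) := ⟨fun c G => projNorm_smul_le c G⟩
    set sp : Submodule 𝕜 (TensorProduct 𝕜 X Y) := 𝕜 ∙ F with hsp
    let e : sp ≃ₗ[𝕜] 𝕜 := LinearEquiv.coord 𝕜 _ F hF
    let f₀ : sp →ₗ[𝕜] 𝕜 := ((projNorm 𝕜 F : ℝ) : 𝕜) • (e : sp →ₗ[𝕜] 𝕜)
    have hbound : ∀ v : sp, ‖f₀ v‖ ≤ 1 * ‖v‖ := by
      intro v
      have h2 : e v • F = (v : TensorProduct 𝕜 X Y) := LinearEquiv.coord_apply_smul 𝕜 _ F hF v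
      have h3 : ‖v‖ = projNorm 𝕜 (v : TensorProduct 𝕜 X Y) := rfl
      have h4 : ‖f₀ v‖ = projNorm 𝕜 F * ‖e v‖ := by
        simp [f₀, norm_smul, RCLike.norm_ofReal, abs_of_nonneg (projNorm_nonneg F)]
      rw [one_mul, h4, h3, ← h2, projNorm_smul]
      ring_nf
      exact le_refl _
    let f : sp →L[𝕜] 𝕜 := f₀.mkContinuous 1 hbound
    obtain ⟨g, hg, hgnorm⟩ := exists_extension_norm_eq sp f
    have hgle : ‖g‖ ≤ 1 := by
      rw [hgnorm]
      exact f₀.mkContinuous_norm_le zero_le_one hbound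
    let φ₀ : X →ₗ[𝕜] Y →ₗ[𝕜] 𝕜 := (TensorProduct.mk 𝕜 X Y).compr₂ (g : TensorProduct 𝕜 X Y →ₗ[𝕜] 𝕜)
    have hφbound : ∀ (x : X) (y : Y), ‖φ₀ x y‖ ≤ 1 * ‖x‖ * ‖y‖ := by
      intro x y
      have : ‖g (x ⊗ₜ[𝕜] y)‖ ≤ ‖g‖ * ‖x ⊗ₜ[𝕜] y‖ := g.le_opNorm _
      have h5 : ‖x ⊗ₜ[𝕜] y‖ = projNorm 𝕜 (x ⊗ₜ[𝕜] y) := rfl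
      calc ‖φ₀ x y‖ = ‖g (x ⊗ₜ[𝕜] y)‖ := rfl
        _ ≤ ‖g‖ * ‖x ⊗ₜ[𝕜] y‖ := g.le_opNorm _
        _ ≤ 1 * (‖x‖ * ‖y‖) := by
            refine mul_le_mul hgle ?_ (norm_nonneg _) zero_le_one
            rw [h5]; exact projNorm_tmul_le x y
        _ = 1 * ‖x‖ * ‖y‖ := by ring
    let φ : X →L[𝕜] Y →L[𝕜] 𝕜 := LinearMap.mkContinuous₂ φ₀ 1 hφbound
    have hφle : ‖φ‖ ≤ 1 := LinearMap.mkContinuous₂_norm_le φ₀ zero_le_one hφbound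
    have hlift : TensorProduct.lift ((ContinuousLinearMap.coeLM 𝕜).comp
        (φ : X →ₗ[𝕜] Y →L[𝕜] 𝕜)) = (g : TensorProduct 𝕜 X Y →ₗ[𝕜] 𝕜) :=
      TensorProduct.ext' fun x y => rfl
    refine ⟨φ, hφle, ?_⟩
    rw [hlift]
    have hFmem : F ∈ sp := Submodule.mem_span_singleton_self F
    have h6 : g F = f ⟨F, hFmem⟩ := hg ⟨F, hFmem⟩
    have h7 : f ⟨F, hFmem⟩ = ((projNorm 𝕜 F : ℝ) : 𝕜) * e ⟨F, hFmem⟩ := rfl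
    have h8 : e ⟨F, hFmem⟩ = 1 := LinearEquiv.coord_self 𝕜 _ F hF
    show projNorm 𝕜 F = ‖g F‖
    rw [h6, h7, h8, mul_one, RCLike.norm_ofReal, abs_of_nonneg (projNorm_nonneg F)]
  exact (IsGreatest.csSup_eq ⟨hmem, hub⟩).symm
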